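/- arXiv:1206.2059 — 3 statements merged into one kernel-verified Lean document; each statement's English description precedes it below -/
import Mathlib

section
/- For any undirected graph G on n ≥ 1 vertices with adjacency matrix C and any y in the probability simplex, yᵀ(I+C)y ≥ 1/α(G), where α(G) is the independence number of G. -/
open Matrix BigOperators

/-- `s` is an independent set of `G`: pairwise non-adjacent vertices. -/
def IsIndepSet {n : ℕ} (G : SimpleGraph (Fin n)) (s : Finset (Fin n)) : Prop :=
  ∀ i ∈ s, ∀ j ∈ s, ¬ G.Adj i j

private lemma quad_expand {n : ℕ} (M : Matrix (Fin n) (Fin n) ℝ) (y d : Fin n → ℝ) (t : ℝ) :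
    (y + t • d) ⬝ᵥ (M *ᵥ (y + t • d)) =
      y ⬝ᵥ (M *ᵥ y) + t * (y ⬝ᵥ (M *ᵥ d) + d ⬝ᵥ (M *ᵥ y)) + t ^ 2 * (d ⬝ᵥ (M *ᵥ d)) := by
  simp only [mulVec_add, mulVec_smul, dotProduct_add, add_dotProduct, dotProduct_smul,
    smul_dotProduct, smul_eq_mul]
  ring

/-- Shifting mass along an adjacent pair: the quadratic form is affine along `e_i - e_j`,
so if the linear coefficient is `≤ 0` we may move all mass of `j` onto `i`, not increasing
the value and strictly shrinking the support. -/
private lemma shift_step {n : ℕ} (G : SimpleGraph (Fin n)) [DecidableRel G.Adj]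
    (y : Fin n → ℝ) (hy : y ∈ stdSimplex ℝ (Fin n)) (i j : Fin n)
    (hi : y i ≠ 0) (hj : y j ≠ 0) (hadj : G.Adj i j)
    (hB : y ⬝ᵥ ((1 + G.adjMatrix ℝ) *ᵥ (Pi.single i 1 - Pi.single j 1)) +
        (Pi.single i (1:ℝ) - Pi.single j 1) ⬝ᵥ ((1 + G.adjMatrix ℝ) *ᵥ y) ≤ 0) :
    ∃ z : Fin n → ℝ, z ∈ stdSimplex ℝ (Fin n) ∧
      z ⬝ᵥ ((1 + G.adjMatrix ℝ) *ᵥ z) ≤ y ⬝ᵥ ((1 + G.adjMatrix ℝ) *ᵥ y) ∧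
      (Finset.univ.filter fun k => z k ≠ 0).card < (Finset.univ.filter fun k => y k ≠ 0).card := by
  classical
  have hne : i ≠ j := G.ne_of_adj hadj
  set M := (1 : Matrix (Fin n) (Fin n) ℝ) + G.adjMatrix ℝ with hM
  set d : Fin n → ℝ := Pi.single i 1 - Pi.single j 1 with hd
  have hdk : ∀ k, d k = (if k = i then 1 else 0) - (if k = j then 1 else 0) := by
    intro k; simp [hd, Pi.single_apply]
  -- the quadratic coefficient vanishes
  have hMii : M i i = 1 := by simp [hM, Matrix.add_apply, Matrix.one_apply]
  have hMjj : M j j = 1 := by simp [hM, Matrix.add_apply, Matrix.one_apply]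
  have hMij : M i j = 1 := by
    simp [hM, Matrix.add_apply, Matrix.one_apply, hne, hadj]
  have hMji : M j i = 1 := by
    simp [hM, Matrix.add_apply, Matrix.one_apply, hne.symm, G.adj_symm hadj]
  have hMd : ∀ k, (M *ᵥ d) k = M k i - M k j := by
    intro k
    simp only [mulVec, dotProduct, hdk, mul_sub, mul_ite, mul_one, mul_zero]
    rw [Finset.sum_sub_distrib]
    simp
  have hc : d ⬝ᵥ (M *ᵥ d) = 0 := by
    simp only [dotProduct, hdk, hMd, sub_mul, ite_mul, one_mul, zero_mul]
    rw [Finset.sum_sub_distrib]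
    simp [hMii, hMjj, hMij, hMji]
  set t : ℝ := y j with ht
  have htpos : 0 < t := lt_of_le_of_ne (hy.1 j) (Ne.symm hj)
  set z : Fin n → ℝ := y + t • d with hz
  have hzk : ∀ k, z k = y k + t * d k := fun k => rfl
  have hzj : z j = 0 := by simp [hzk, hdk, hne.symm, ht]
  have hzi : z i = y i + y j := by simp [hzk, hdk, hne, ht]
  have hzo : ∀ k, k ≠ i → k ≠ j → z k = y k := by
    intro k hki hkj; simp [hzk, hdk, hki, hkj]
  refine ⟨z, ⟨?_, ?_⟩, ?_, ?_⟩
  · intro k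
    rcases eq_or_ne k i with rfl | hki
    · rw [hzi]; exact add_nonneg (hy.1 k) (hy.1 j)
    rcases eq_or_ne k j with rfl | hkj
    · rw [hzj]
    · rw [hzo k hki hkj]; exact hy.1 k
  · have : ∑ k, z k = ∑ k, y k + t * ∑ k, d k := by
      simp only [hzk, Finset.sum_add_distrib, Finset.mul_sum]
    rw [this, hy.2]
    have : ∑ k, d k = 0 := by
      simp only [hdk]
      rw [Finset.sum_sub_distrib]
      simp
    rw [this]; ring
  · rw [hz, quad_expand, hc]
    have : t * (y ⬝ᵥ (M *ᵥ d) + d ⬝ᵥ (M *ᵥ y)) ≤ 0 :=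
      mul_nonpos_of_nonneg_of_nonpos htpos.le hB
    linarith
  · apply Finset.card_lt_card
    constructor
    · intro k hk
      simp only [Finset.mem_filter, Finset.mem_univ, true_and] at hk ⊢
      rcases eq_or_ne k i with rfl | hki
      · exact hi
      rcases eq_or_ne k j with rfl | hkj
      · exact absurd hzj hk
      · rwa [hzo k hki hkj] at hk
    · intro hsub
      have := hsub (Finset.mem_filter.2 ⟨Finset.mem_univ j, hj⟩)
      simp only [Finset.mem_filter, Finset.mem_univ, true_and] at this
      exact this hzj

private lemma key_aux {n : ℕ} (G : SimpleGraph (Fin n)) [DecidableRel G.Adj] (α : ℕ)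
    (hα : IsGreatest {k : ℕ | ∃ s : Finset (Fin n), IsIndepSet G s ∧ s.card = k} α) :
    ∀ N : ℕ, ∀ y : Fin n → ℝ, y ∈ stdSimplex ℝ (Fin n) →
      (Finset.univ.filter fun k => y k ≠ 0).card ≤ N →
      1 / (α : ℝ) ≤ y ⬝ᵥ ((1 + G.adjMatrix ℝ) *ᵥ y) := by
  classical
  intro N
  induction N with
  | zero =>
    intro y hy hcard
    exfalso
    have hS : (Finset.univ.filter fun k => y k ≠ 0) = ∅ := Finset.card_eq_zero.1 (Nat.le_zero.1 hcard)
    have : ∑ k, y k = 0 := by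
      apply Finset.sum_eq_zero
      intro k _
      by_contra h
      have : k ∈ Finset.univ.filter fun k => y k ≠ 0 := Finset.mem_filter.2 ⟨Finset.mem_univ k, h⟩
      rw [hS] at this; exact absurd this (Finset.notMem_empty k)
    rw [hy.2] at this; norm_num at this
  | succ N ih =>
    intro y hy hcard
    set S := Finset.univ.filter fun k => y k ≠ 0 with hSdef
    by_cases hindep : IsIndepSet G S
    · -- base case: support is independent, value is ∑ y_i², use Cauchy–Schwarz
      have hat : ∀ i ∈ S, y i ≠ 0 := by
        intro i hiS; exact (Finset.mem_filter.1 hiS).2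
      have hQ : y ⬝ᵥ ((1 + G.adjMatrix ℝ) *ᵥ y) = ∑ i, y i ^ 2 := by
        apply Finset.sum_congr rfl
        intro i _
        show y i * ∑ j, ((1 : Matrix (Fin n) (Fin n) ℝ) + G.adjMatrix ℝ) i j * y j = y i ^ 2
        rcases eq_or_ne (y i) 0 with h0 | h0
        · rw [h0]; ring
        have hiS : i ∈ S := Finset.mem_filter.2 ⟨Finset.mem_univ i, h0⟩
        have : ∀ j, ((1 : Matrix (Fin n) (Fin n) ℝ) + G.adjMatrix ℝ) i j * y j =
            (if i = j then 1 else 0) * y j := by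
          intro j
          rcases eq_or_ne (y j) 0 with hj0 | hj0
          · rw [hj0]; ring
          have hjS : j ∈ S := Finset.mem_filter.2 ⟨Finset.mem_univ j, hj0⟩
          have hnadj : ¬ G.Adj i j := hindep i hiS j hjS
          simp [Matrix.add_apply, Matrix.one_apply, hnadj]
        rw [Finset.sum_congr rfl fun j _ => this j]
        simp [Finset.sum_ite_eq, sq]
      rw [hQ]
      -- S is nonempty
      have hsumS : ∑ i ∈ S, y i = 1 := by
        rw [hSdef, Finset.sum_filter_ne_zero, hy.2]
      have hSne : S.Nonempty := by
        by_contra h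
        rw [Finset.not_nonempty_iff_eq_empty] at h
        rw [h] at hsumS; simp at hsumS
      have hScard : (S.card : ℝ) ≤ (α : ℝ) := by
        exact_mod_cast hα.2 ⟨S, hindep, rfl⟩
      have hSpos : (0 : ℝ) < S.card := by
        exact_mod_cast Finset.card_pos.2 hSne
      have hαpos : (0 : ℝ) < (α : ℝ) := lt_of_lt_of_le hSpos hScard
      have hCS : (1 : ℝ) ≤ S.card * ∑ i ∈ S, y i ^ 2 := by
        have := sq_sum_le_card_mul_sum_sq (s := S) (f := y)
        rw [hsumS] at this; simpa using this
      have hle : ∑ i ∈ S, y i ^ 2 ≤ ∑ i, y i ^ 2 :=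
        Finset.sum_le_sum_of_subset_of_nonneg (Finset.subset_univ S)
          (fun i _ _ => sq_nonneg (y i))
      rw [div_le_iff₀ hαpos]
      calc (1 : ℝ) ≤ S.card * ∑ i ∈ S, y i ^ 2 := hCS
        _ ≤ α * ∑ i, y i ^ 2 := by
            apply mul_le_mul hScard hle (Finset.sum_nonneg fun i _ => sq_nonneg (y i)) hαpos.le
        _ = (∑ i, y i ^ 2) * α := by ring
    · -- inductive step: there is an adjacent pair in the support
      simp only [IsIndepSet, not_forall] at hindep
      obtain ⟨i, hiS, j, hjS, hadj⟩ := hindep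
      have hadj : G.Adj i j := not_not.1 hadj
      have hi : y i ≠ 0 := (Finset.mem_filter.1 hiS).2
      have hj : y j ≠ 0 := (Finset.mem_filter.1 hjS).2
      set M := (1 : Matrix (Fin n) (Fin n) ℝ) + G.adjMatrix ℝ with hM
      set B := y ⬝ᵥ (M *ᵥ (Pi.single i (1:ℝ) - Pi.single j 1)) +
        (Pi.single i (1:ℝ) - Pi.single j 1) ⬝ᵥ (M *ᵥ y) with hB
      have hstep : ∃ z : Fin n → ℝ, z ∈ stdSimplex ℝ (Fin n) ∧
          z ⬝ᵥ (M *ᵥ z) ≤ y ⬝ᵥ (M *ᵥ y) ∧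
          (Finset.univ.filter fun k => z k ≠ 0).card < S.card := by
        rcases le_or_gt B 0 with hBle | hBgt
        · exact shift_step G y hy i j hi hj hadj hBle
        · have hB' : y ⬝ᵥ (M *ᵥ (Pi.single j (1:ℝ) - Pi.single i 1)) +
              (Pi.single j (1:ℝ) - Pi.single i 1) ⬝ᵥ (M *ᵥ y) ≤ 0 := by
            have h1 : ((Pi.single j 1 : Fin n → ℝ) - Pi.single i 1) = -((Pi.single i 1 : Fin n → ℝ) - Pi.single j 1) := by
              ring
            rw [h1]
            simp only [mulVec_neg, dotProduct_neg, neg_dotProduct]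
            rw [hB] at hBgt
            linarith
          exact shift_step G y hy j i hj hi (G.adj_symm hadj) hB'
      obtain ⟨z, hz, hle, hlt⟩ := hstep
      have hzcard : (Finset.univ.filter fun k => z k ≠ 0).card ≤ N := by
        omega
      exact le_trans (ih z hz hzcard) hle

/-- For a graph `G` on `n ≥ 1` vertices with adjacency matrix `C` and
independence number `α`, every `y` in the probability simplex satisfies
`yᵀ(I+C)y ≥ 1/α`. -/
theorem quad_ge_inv_indepNum (n : ℕ) (hn : 0 < n) (G : SimpleGraph (Fin n))
    [DecidableRel G.Adj] (α : ℕ)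
    (hα : IsGreatest {k : ℕ | ∃ s : Finset (Fin n), IsIndepSet G s ∧ s.card = k} α)
    (y : Fin n → ℝ) (hy : y ∈ stdSimplex ℝ (Fin n)) :
    1 / (α : ℝ) ≤ y ⬝ᵥ ((1 + G.adjMatrix ℝ) *ᵥ y) := by
  exact key_aux G α hα _ y hy le_rfl
end

section
/- If A is an entrywise nonnegative real square matrix, then I - A is positive stable (all eigenvalues have positive real part) if and only if ρ(A) < 1. -/
open Matrix BigOperators
open scoped ENNReal NNReal Topology

variable {n : ℕ}

private lemma map_one_sub (A : Matrix (Fin n) (Fin n) ℝ) :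
    ((1 : Matrix (Fin n) (Fin n) ℝ) - A).map Complex.ofReal
      = 1 - A.map Complex.ofReal := by
  ext i j
  by_cases h : i = j <;>
    simp [Matrix.map_apply, Matrix.one_apply, Matrix.sub_apply, h]

private lemma mem_spec_one_sub_iff (A : Matrix (Fin n) (Fin n) ℝ) (z : ℂ) :
    z ∈ spectrum ℂ (((1 : Matrix (Fin n) (Fin n) ℝ) - A).map Complex.ofReal)
      ↔ (1 - z) ∈ spectrum ℂ (A.map Complex.ofReal) := by
  rw [map_one_sub A, spectrum.mem_iff, spectrum.mem_iff]
  have key : (algebraMap ℂ (Matrix (Fin n) (Fin n) ℂ)) z - (1 - A.map Complex.ofReal)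
      = -((algebraMap ℂ (Matrix (Fin n) (Fin n) ℂ)) (1 - z) - A.map Complex.ofReal) := by
    rw [map_sub, _root_.map_one]; abel
  rw [key, IsUnit.neg_iff]

private lemma spec_set_eq (A : Matrix (Fin n) (Fin n) ℝ) :
    {r : ℝ | ∃ μ ∈ spectrum ℂ (A.map Complex.ofReal), r = ‖μ‖}
      = (fun μ : ℂ => ‖μ‖) '' (spectrum ℂ (A.map Complex.ofReal)) := by
  ext r
  simp only [Set.mem_setOf_eq, Set.mem_image]
  constructor
  · rintro ⟨μ, hμ, rfl⟩; exact ⟨μ, hμ, rfl⟩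
  · rintro ⟨μ, hμ, rfl⟩; exact ⟨μ, hμ, rfl⟩


private lemma pow_entry_nonneg (A : Matrix (Fin n) (Fin n) ℝ)
    (hA : ∀ i j, 0 ≤ A i j) (k : ℕ) : ∀ i j, 0 ≤ (A ^ k) i j := by
  induction k with
  | zero => intro i j; by_cases h : i = j <;> simp [Matrix.one_apply, h]
  | succ m ih =>
      intro i j
      rw [pow_succ, Matrix.mul_apply]
      exact Finset.sum_nonneg fun l _ => mul_nonneg (ih i l) (hA l j)

private lemma map_pow_ofReal (A : Matrix (Fin n) (Fin n) ℝ) (k : ℕ) :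
    (A.map Complex.ofReal) ^ k = (A ^ k).map Complex.ofReal := by
  induction k with
  | zero =>
      simp [Matrix.map_one Complex.ofReal Complex.ofReal_zero Complex.ofReal_one]
  | succ m ih =>
      rw [pow_succ, pow_succ, ih]
      exact (Matrix.map_mul (f := Complex.ofRealHom)).symm

private lemma det_map_ofReal (M : Matrix (Fin n) (Fin n) ℝ) :
    (M.map Complex.ofReal).det = (M.det : ℂ) :=
  (RingHom.map_det Complex.ofRealHom M).symm

private lemma det_one_sub_smul_ne_zero (A : Matrix (Fin n) (Fin n) ℝ) {t : ℝ} (ht0 : 0 < t)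
    (hts : (t : ℂ) ∉ spectrum ℂ (A.map Complex.ofReal)) :
    ((1 : Matrix (Fin n) (Fin n) ℝ) - t⁻¹ • A).det ≠ 0 := by
  have htne : (t : ℝ) ≠ 0 := ne_of_gt ht0
  have htCne : (t : ℂ) ≠ 0 := by exact_mod_cast htne
  have hunit : IsUnit ((algebraMap ℂ (Matrix (Fin n) (Fin n) ℂ)) t - A.map Complex.ofReal) :=
    spectrum.notMem_iff.mp hts
  have hdetC : ((algebraMap ℂ (Matrix (Fin n) (Fin n) ℂ)) t - A.map Complex.ofReal).det ≠ 0 := by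
    intro h
    rw [Matrix.isUnit_iff_isUnit_det, h] at hunit
    exact (not_isUnit_zero : ¬ IsUnit (0 : ℂ)) hunit
  have hmap : ((1 : Matrix (Fin n) (Fin n) ℝ) - t⁻¹ • A).map Complex.ofReal
      = (t : ℂ)⁻¹ • ((algebraMap ℂ (Matrix (Fin n) (Fin n) ℂ)) t - A.map Complex.ofReal) := by
    ext i j
    by_cases h : i = j <;>
      simp [Matrix.map_apply, Matrix.sub_apply, Matrix.smul_apply, Matrix.one_apply,
        Matrix.algebraMap_matrix_apply, h] <;>
      field_simp
  intro hd
  have hzero : (((1 : Matrix (Fin n) (Fin n) ℝ) - t⁻¹ • A).map Complex.ofReal).det = 0 := by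
    rw [det_map_ofReal, hd, Complex.ofReal_zero]
  rw [hmap, Matrix.det_smul] at hzero
  rcases mul_eq_zero.mp hzero with h1 | h2
  · simp only [Fintype.card_fin] at h1
    exact (pow_ne_zero n (inv_ne_zero htCne)) h1
  · exact hdetC h2


private lemma inv_one_sub_smul_nonneg (A : Matrix (Fin n) (Fin n) ℝ)
    (hA : ∀ i j, 0 ≤ A i j) {r t : ℝ} (hr0 : 0 ≤ r)
    (hr : ∀ z ∈ spectrum ℂ (A.map Complex.ofReal), ‖z‖ ≤ r) (hrt : r < t) :
    ∀ i j, 0 ≤ ((1 : Matrix (Fin n) (Fin n) ℝ) - t⁻¹ • A)⁻¹ i j := by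
  letI : NormedRing (Matrix (Fin n) (Fin n) ℂ) := Matrix.linftyOpNormedRing
  letI : NormedAlgebra ℂ (Matrix (Fin n) (Fin n) ℂ) := Matrix.linftyOpNormedAlgebra
  set B := A.map Complex.ofReal with hB
  have ht0 : 0 < t := lt_of_le_of_lt hr0 hrt
  have htne : (t : ℝ) ≠ 0 := ne_of_gt ht0
  -- t is not in the spectrum
  have hts : (t : ℂ) ∉ spectrum ℂ B := by
    intro hmem
    have := hr _ hmem
    rw [Complex.norm_real, Real.norm_eq_abs, abs_of_pos ht0] at this
    exact absurd hrt (not_lt.mpr this)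
  -- spectral radius bound
  have hsr : spectralRadius ℂ B ≤ ENNReal.ofReal r := by
    rw [spectralRadius]
    refine iSup₂_le fun z hz => ?_
    rw [← ENNReal.ofReal_coe_nnreal, coe_nnnorm]
    exact ENNReal.ofReal_le_ofReal (hr z hz)
  set y : ℂ := ((t⁻¹ : ℝ) : ℂ) with hy
  have hynorm : (‖y‖₊ : ℝ≥0∞) = (ENNReal.ofReal t)⁻¹ := by
    rw [← ENNReal.ofReal_inv_of_pos ht0, ← ENNReal.ofReal_coe_nnreal, coe_nnnorm]
    congr 1
    rw [hy, Complex.norm_real, Real.norm_eq_abs, abs_of_pos (inv_pos.mpr ht0)]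
  have hylt : (‖y‖₊ : ℝ≥0∞) < (spectralRadius ℂ B)⁻¹ := by
    rw [hynorm]
    refine ENNReal.inv_lt_inv.mpr ?_
    exact lt_of_le_of_lt hsr (by exact_mod_cast ENNReal.ofReal_lt_ofReal_iff ht0 |>.mpr hrt)
  obtain ⟨c, hc1, hc2⟩ := exists_between hylt
  have hcne : c ≠ ⊤ := by
    intro hctop
    rw [hctop] at hc2
    exact (not_top_lt (lt_of_le_of_lt le_top hc2)).elim
  lift c to NNReal using hcne with c'
  have hypos : (0 : ℝ≥0∞) < (‖y‖₊ : ℝ≥0∞) := by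
    rw [ENNReal.coe_pos, nnnorm_pos]
    show ((t⁻¹ : ℝ) : ℂ) ≠ 0
    exact_mod_cast inv_ne_zero htne
  have hc'pos : 0 < c' := by
    have := lt_trans hypos hc1
    exact_mod_cast this
  have hdiff := spectrum.differentiableOn_inverse_one_sub_smul (𝕜 := ℂ) (a := B) hc2
  have hball := hdiff.hasFPowerSeriesOnBall hc'pos
  have hser := (spectrum.hasFPowerSeriesOnBall_inverse_one_sub_smul ℂ B).exchange_radius hball
  have hmem : y ∈ Metric.eball (0 : ℂ) c' := by
    rw [Metric.mem_eball, edist_zero_right]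
    exact_mod_cast hc1
  have hsum0 := hser.hasSum hmem
  simp only [zero_add, ContinuousMultilinearMap.mkPiRing_apply, Finset.prod_const,
    Finset.card_univ, Fintype.card_fin] at hsum0
  -- identify Ring.inverse with the real inverse
  intro i j
  have hcont : Continuous fun M : Matrix (Fin n) (Fin n) ℂ => M i j :=
    (continuous_apply j).comp (continuous_apply i)
  have hproj : HasSum (fun k => (y ^ k • B ^ k) i j) ((Ring.inverse (1 - y • B)) i j) := by
    have := hsum0.map
      (AddMonoidHom.mk' (fun M : Matrix (Fin n) (Fin n) ℂ => M i j) (fun _ _ => rfl)) hcont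
    exact this
  have hre : HasSum (fun k => ((y ^ k • B ^ k) i j).re) ((Ring.inverse (1 - y • B)) i j).re :=
    hproj.mapL Complex.reCLM
  have hterm : ∀ k : ℕ, ((y ^ k • B ^ k) i j).re = t⁻¹ ^ k * (A ^ k) i j := by
    intro k
    rw [map_pow_ofReal A k]
    show (y ^ k * ((A ^ k).map Complex.ofReal) i j).re = _
    rw [Matrix.map_apply]
    show (((t⁻¹ : ℝ) : ℂ) ^ k * ((A ^ k) i j : ℂ)).re = _
    rw [← Complex.ofReal_pow, ← Complex.ofReal_mul, Complex.ofReal_re]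
  have hnn : 0 ≤ ((Ring.inverse (1 - y • B)) i j).re := by
    refine hre.nonneg fun k => ?_
    rw [hterm k]
    exact mul_nonneg (pow_nonneg (inv_nonneg.mpr ht0.le) k) (pow_entry_nonneg A hA k i j)
  -- now transfer to the real matrix
  set D : Matrix (Fin n) (Fin n) ℝ := 1 - t⁻¹ • A with hD
  have hmapD : D.map Complex.ofReal = 1 - y • B := by
    ext a b
    have hyB : ∀ a b, y * B a b = ((t⁻¹ * A a b : ℝ) : ℂ) := by
      intro a b
      show ((t⁻¹ : ℝ) : ℂ) * (A.map Complex.ofReal) a b = _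
      rw [Matrix.map_apply, ← Complex.ofReal_mul]
    by_cases h : a = b
    · subst h
      simp [hD, Matrix.map_apply, Matrix.sub_apply, Matrix.smul_apply, Matrix.one_apply, hyB]
    · simp [hD, Matrix.map_apply, Matrix.sub_apply, Matrix.smul_apply, Matrix.one_apply, h, hyB]
  have hdetD : D.det ≠ 0 := det_one_sub_smul_ne_zero A ht0 hts
  have hinv : Ring.inverse ((1 : Matrix (Fin n) (Fin n) ℂ) - y • B) = (D⁻¹).map Complex.ofReal := by
    rw [← Matrix.nonsing_inv_eq_ringInverse, ← hmapD]
    apply Matrix.inv_eq_right_inv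
    have hone : (D * D⁻¹).map Complex.ofReal = 1 := by
      rw [Matrix.mul_nonsing_inv _ (isUnit_iff_ne_zero.mpr hdetD)]
      exact Matrix.map_one Complex.ofReal Complex.ofReal_zero Complex.ofReal_one
    rw [← hone]
    exact (Matrix.map_mul (f := Complex.ofRealHom)).symm
  rw [hinv] at hnn
  simpa using hnn


/-- The spectral radius of a real square matrix: the supremum of the moduli of its
complex eigenvalues. -/
noncomputable def specRad {n : ℕ} (A : Matrix (Fin n) (Fin n) ℝ) : ℝ :=
  sSup {r : ℝ | ∃ μ ∈ spectrum ℂ (A.map Complex.ofReal), r = ‖μ‖}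

private lemma specRad_mem (A : Matrix (Fin n) (Fin n) ℝ) (hA : ∀ i j, 0 ≤ A i j)
    (hne : (spectrum ℂ (A.map Complex.ofReal)).Nonempty) :
    ((specRad A : ℝ) : ℂ) ∈ spectrum ℂ (A.map Complex.ofReal) := by
  classical
  have hfin : {s : ℝ | ∃ μ ∈ spectrum ℂ (A.map Complex.ofReal), s = ‖μ‖}.Finite := by
    rw [spec_set_eq]; exact (Matrix.finite_spectrum _).image _
  have hSne : {s : ℝ | ∃ μ ∈ spectrum ℂ (A.map Complex.ofReal), s = ‖μ‖}.Nonempty :=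
    ⟨‖hne.choose‖, hne.choose, hne.choose_spec, rfl⟩
  have hmem : specRad A ∈ {s : ℝ | ∃ μ ∈ spectrum ℂ (A.map Complex.ofReal), s = ‖μ‖} :=
    hSne.csSup_mem hfin
  obtain ⟨z0, hz0, hz0n⟩ := hmem
  set r := specRad A with hrdef
  have hr0 : 0 ≤ r := hz0n ▸ norm_nonneg _
  have hub : ∀ z ∈ spectrum ℂ (A.map Complex.ofReal), ‖z‖ ≤ r := fun z hz =>
    le_csSup hfin.bddAbove ⟨z, hz, rfl⟩
  by_contra hspec
  have hrpos : 0 < r := by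
    rcases lt_or_eq_of_le hr0 with h | h
    · exact h
    · exfalso
      apply hspec
      have h1 : ‖z0‖ = 0 := by rw [← hz0n, ← h]
      have hz00 : z0 = 0 := by simpa using h1
      rw [← h, Complex.ofReal_zero, ← hz00]
      exact hz0
  have hrne : r ≠ 0 := ne_of_gt hrpos
  -- eigenvector for z0
  have hdet : ((algebraMap ℂ (Matrix (Fin n) (Fin n) ℂ)) z0 - A.map Complex.ofReal).det = 0 := by
    by_contra hd
    exact (spectrum.mem_iff.mp hz0)
      ((Matrix.isUnit_iff_isUnit_det _).mpr (isUnit_iff_ne_zero.mpr hd))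
  obtain ⟨v, hv0, hv⟩ := Matrix.exists_mulVec_eq_zero_iff.mpr hdet
  have hvB : (A.map Complex.ofReal) *ᵥ v = z0 • v := by
    have h1 : (algebraMap ℂ (Matrix (Fin n) (Fin n) ℂ)) z0 *ᵥ v
        - (A.map Complex.ofReal) *ᵥ v = 0 := by
      rw [← Matrix.sub_mulVec]; exact hv
    have h2 : (algebraMap ℂ (Matrix (Fin n) (Fin n) ℂ)) z0 *ᵥ v = z0 • v := by
      rw [Algebra.algebraMap_eq_smul_one, Matrix.smul_mulVec, Matrix.one_mulVec]
    rw [h2] at h1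
    exact (sub_eq_zero.mp h1).symm
  set u : Fin n → ℝ := fun i => ‖v i‖ with hu
  have hu0 : ∀ i, 0 ≤ u i := fun i => norm_nonneg _
  have huA : ∀ i, r * u i ≤ (A *ᵥ u) i := by
    intro i
    have h1 : r * u i = ‖((A.map Complex.ofReal) *ᵥ v) i‖ := by
      rw [hvB]
      show r * ‖v i‖ = ‖z0 * v i‖
      rw [norm_mul, hz0n]
    rw [h1]
    show ‖∑ j, (A.map Complex.ofReal) i j * v j‖ ≤ ∑ j, A i j * u j
    refine le_trans (norm_sum_le _ _) (Finset.sum_le_sum fun j _ => ?_)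
    rw [norm_mul, Matrix.map_apply, Complex.norm_real, Real.norm_eq_abs,
      abs_of_nonneg (hA i j)]
  -- key inequality for t > r
  have key : ∀ t ∈ Set.Ioi r, ∀ i,
      u i ≤ ((t - r)/t) * ((((1 : Matrix (Fin n) (Fin n) ℝ) - t⁻¹ • A)⁻¹) *ᵥ u) i := by
    intro t htIoi i
    have htr : r < t := htIoi
    have ht0 : 0 < t := lt_trans hrpos htr
    have htne : t ≠ 0 := ne_of_gt ht0
    have hinvnn := inv_one_sub_smul_nonneg A hA hr0 hub htr
    have htsp : (t : ℂ) ∉ spectrum ℂ (A.map Complex.ofReal) := by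
      intro hmem
      have h1 := hub _ hmem
      rw [Complex.norm_real, Real.norm_eq_abs, abs_of_pos ht0] at h1
      exact absurd htr (not_lt.mpr h1)
    have hdetD : ((1 : Matrix (Fin n) (Fin n) ℝ) - t⁻¹ • A).det ≠ 0 :=
      det_one_sub_smul_ne_zero A ht0 htsp
    set D := (1 : Matrix (Fin n) (Fin n) ℝ) - t⁻¹ • A with hD
    have hDu : ∀ l, (D *ᵥ u) l ≤ ((t - r)/t) * u l := by
      intro l
      have hDmv : D *ᵥ u = u - t⁻¹ • (A *ᵥ u) := by
        rw [hD, Matrix.sub_mulVec, Matrix.one_mulVec, Matrix.smul_mulVec]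
      rw [hDmv]
      show u l - t⁻¹ * (A *ᵥ u) l ≤ ((t - r)/t) * u l
      have h2 : t⁻¹ * (r * u l) ≤ t⁻¹ * (A *ᵥ u) l :=
        mul_le_mul_of_nonneg_left (huA l) (inv_nonneg.mpr ht0.le)
      have h3 : ((t - r)/t) * u l = u l - t⁻¹ * (r * u l) := by
        field_simp
      linarith
    have hmono : (D⁻¹ *ᵥ (D *ᵥ u)) i ≤ (D⁻¹ *ᵥ (fun l => ((t - r)/t) * u l)) i := by
      show ∑ l, D⁻¹ i l * (D *ᵥ u) l ≤ ∑ l, D⁻¹ i l * (((t - r)/t) * u l)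
      exact Finset.sum_le_sum fun l _ =>
        mul_le_mul_of_nonneg_left (hDu l) (hinvnn i l)
    have hLHS : D⁻¹ *ᵥ (D *ᵥ u) = u := by
      rw [Matrix.mulVec_mulVec, Matrix.nonsing_inv_mul _ (isUnit_iff_ne_zero.mpr hdetD),
        Matrix.one_mulVec]
    have hRHS : (D⁻¹ *ᵥ (fun l => ((t - r)/t) * u l)) i = ((t - r)/t) * (D⁻¹ *ᵥ u) i := by
      have hsmul : (fun l => ((t - r)/t) * u l) = ((t - r)/t) • u := rfl
      rw [hsmul, Matrix.mulVec_smul]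
      rfl
    calc u i = (D⁻¹ *ᵥ (D *ᵥ u)) i := by rw [hLHS]
    _ ≤ (D⁻¹ *ᵥ (fun l => ((t - r)/t) * u l)) i := hmono
    _ = ((t - r)/t) * (D⁻¹ *ᵥ u) i := hRHS
  -- pass to the limit t → r⁺
  have hdetr : ((1 : Matrix (Fin n) (Fin n) ℝ) - r⁻¹ • A).det ≠ 0 :=
    det_one_sub_smul_ne_zero A hrpos hspec
  have hcontD : ContinuousAt (fun s : ℝ => (1 : Matrix (Fin n) (Fin n) ℝ) - s⁻¹ • A) r :=
    ContinuousAt.sub continuousAt_const ((continuousAt_inv₀ hrne).smul continuousAt_const)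
  have hcontInv : ContinuousAt
      (fun s : ℝ => ((1 : Matrix (Fin n) (Fin n) ℝ) - s⁻¹ • A)⁻¹) r := by
    have h1 : ContinuousAt Inv.inv ((1 : Matrix (Fin n) (Fin n) ℝ) - r⁻¹ • A) := by
      apply continuousAt_matrix_inv
      rw [Ring.inverse_eq_inv']
      exact continuousAt_inv₀ hdetr
    exact ContinuousAt.comp (x := r) h1 hcontD
  have hui : ∀ i, u i ≤ 0 := by
    intro i
    have hc : Continuous fun M : Matrix (Fin n) (Fin n) ℝ => (M *ᵥ u) i := by
      show Continuous fun M : Matrix (Fin n) (Fin n) ℝ => ∑ l, M i l * u l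
      exact continuous_finset_sum _ fun l _ =>
        ((continuous_id.matrix_elem i l).mul continuous_const)
    have hg : ContinuousAt (fun s : ℝ =>
        ((s - r)/s) * ((((1 : Matrix (Fin n) (Fin n) ℝ) - s⁻¹ • A)⁻¹) *ᵥ u) i) r := by
      apply ContinuousAt.mul
      · exact (continuousAt_id.sub continuousAt_const).div continuousAt_id hrne
      · exact hc.continuousAt.comp hcontInv
    have hval : ((r - r)/r) * ((((1 : Matrix (Fin n) (Fin n) ℝ) - r⁻¹ • A)⁻¹) *ᵥ u) i = 0 := by
      simp
    have hlim : Filter.Tendsto (fun s : ℝ =>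
        ((s - r)/s) * ((((1 : Matrix (Fin n) (Fin n) ℝ) - s⁻¹ • A)⁻¹) *ᵥ u) i)
        (nhdsWithin r (Set.Ioi r)) (nhds 0) := by
      rw [← hval]
      exact hg.tendsto.mono_left nhdsWithin_le_nhds
    refine ge_of_tendsto hlim ?_
    filter_upwards [self_mem_nhdsWithin] with t ht
    exact key t ht i
  apply hv0
  funext i
  have hzero : u i = 0 := le_antisymm (hui i) (hu0 i)
  have : ‖v i‖ = 0 := hzero
  simpa using this

/-- For an entrywise nonnegative real square matrix `A`, the matrix
`I - A` is positive stable (all complex eigenvalues have positive real part) if and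
only if the spectral radius of `A` is less than one. -/
theorem one_sub_posStable_iff_specRad_lt_one (n : ℕ) (A : Matrix (Fin n) (Fin n) ℝ)
    (hA : ∀ i j, 0 ≤ A i j) :
    (∀ μ ∈ spectrum ℂ (((1 : Matrix (Fin n) (Fin n) ℝ) - A).map Complex.ofReal),
        0 < μ.re) ↔ specRad A < 1 := by
  classical
  have hfin : {s : ℝ | ∃ μ ∈ spectrum ℂ (A.map Complex.ofReal), s = ‖μ‖}.Finite := by
    rw [spec_set_eq]; exact (Matrix.finite_spectrum _).image _
  constructor
  · intro h
    by_cases hne : (spectrum ℂ (A.map Complex.ofReal)).Nonempty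
    · have hmem := specRad_mem A hA hne
      have h2 : (1 - (specRad A : ℂ)) ∈ spectrum ℂ
          (((1 : Matrix (Fin n) (Fin n) ℝ) - A).map Complex.ofReal) := by
        rw [mem_spec_one_sub_iff]
        simpa using hmem
      have h3 := h _ h2
      simp only [Complex.sub_re, Complex.one_re, Complex.ofReal_re] at h3
      linarith
    · rw [Set.not_nonempty_iff_eq_empty] at hne
      have hS : {s : ℝ | ∃ μ ∈ spectrum ℂ (A.map Complex.ofReal), s = ‖μ‖} = ∅ := by
        rw [spec_set_eq, hne, Set.image_empty]
      rw [specRad, hS, Real.sSup_empty]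
      norm_num
  · intro h μ hμ
    rw [mem_spec_one_sub_iff] at hμ
    have h1 : ‖1 - μ‖ ≤ specRad A := le_csSup hfin.bddAbove ⟨_, hμ, rfl⟩
    have h2 : (1 - μ).re ≤ ‖1 - μ‖ := Complex.re_le_norm _
    simp only [Complex.sub_re, Complex.one_re] at h2
    linarith
end

section
/- For any graph G on n vertices with adjacency matrix C and any positive integer j ≤ n: there exists π in the probability simplex with πᵀ(I+C)π < 1/j if and only if G has an independent set of size at least j+1 (equivalently α(G) > j). -/
open Matrix BigOperators

section Aux
open Finset

variable {n : ℕ}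

lemma dot_symm (A : Matrix (Fin n) (Fin n) ℝ) (hA : Aᵀ = A) (x y : Fin n → ℝ) :
    x ⬝ᵥ (A *ᵥ y) = y ⬝ᵥ (A *ᵥ x) := by
  rw [Matrix.dotProduct_mulVec, ← hA, Matrix.vecMul_transpose, dotProduct_comm, hA]

lemma Msymm (G : SimpleGraph (Fin n)) [DecidableRel G.Adj] :
    (1 + G.adjMatrix ℝ)ᵀ = 1 + G.adjMatrix ℝ := by
  rw [Matrix.transpose_add, Matrix.transpose_one, (G.isSymm_adjMatrix)]

lemma shift_le (G : SimpleGraph (Fin n)) [DecidableRel G.Adj] {u v : Fin n} (huv : G.Adj u v)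
    {π : Fin n → ℝ} (hπ : π ∈ stdSimplex ℝ (Fin n))
    (hc : ((1 + G.adjMatrix ℝ) *ᵥ π) u ≤ ((1 + G.adjMatrix ℝ) *ᵥ π) v) :
    ∃ π' : Fin n → ℝ, π' ∈ stdSimplex ℝ (Fin n) ∧
      π' ⬝ᵥ ((1 + G.adjMatrix ℝ) *ᵥ π') ≤ π ⬝ᵥ ((1 + G.adjMatrix ℝ) *ᵥ π) ∧
      π' v = 0 ∧ (∀ i, i ≠ u → i ≠ v → π' i = π i) := by
  set M := 1 + G.adjMatrix ℝ with hM
  have hne : u ≠ v := G.ne_of_adj huv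
  set d : Fin n → ℝ := π v • (Pi.single u (1:ℝ) - Pi.single v 1) with hd
  have hdapp : ∀ i, d i = π v * ((if i = u then (1:ℝ) else 0) - if i = v then 1 else 0) := by
    intro i
    simp [hd, Pi.single_apply]
  have hd1 : ∀ w : Fin n → ℝ, d ⬝ᵥ w = π v * (w u - w v) := by
    intro w
    simp [hd, smul_dotProduct, sub_dotProduct, single_dotProduct]
  have hMd : ∀ i, (M *ᵥ d) i = π v * (M i u - M i v) := by
    intro i
    rw [hd, Matrix.mulVec_smul, Matrix.mulVec_sub, Matrix.mulVec_single, Matrix.mulVec_single]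
    simp
  have Muu : M u u = 1 := by simp [hM, Matrix.one_apply]
  have Mvv : M v v = 1 := by simp [hM, Matrix.one_apply]
  have Muv : M u v = 1 := by simp [hM, Matrix.one_apply_ne hne, huv]
  have Mvu : M v u = 1 := by simp [hM, Matrix.one_apply_ne hne.symm, huv.symm]
  have hdMd : d ⬝ᵥ (M *ᵥ d) = 0 := by
    rw [hd1, hMd, hMd, Muu, Muv, Mvu, Mvv]; ring
  have expand : (π + d) ⬝ᵥ (M *ᵥ (π + d))
      = π ⬝ᵥ (M *ᵥ π) + 2 * (d ⬝ᵥ (M *ᵥ π)) + d ⬝ᵥ (M *ᵥ d) := by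
    rw [Matrix.mulVec_add, dotProduct_add, add_dotProduct,
      add_dotProduct, dot_symm M (Msymm G) π d]
    ring
  refine ⟨π + d, ⟨?_, ?_⟩, ?_, ?_, ?_⟩
  · intro i
    have := hπ.1 i
    have hv := hπ.1 v
    rw [Pi.add_apply, hdapp i]
    by_cases hiu : i = u
    · subst hiu; simp [hne]; positivity
    · by_cases hiv : i = v
      · subst hiv; simp [hiu]
      · simp [hiu, hiv, this]
  · have : ∑ i, (π + d) i = ∑ i, π i + ∑ i, d i := by
      simp [Finset.sum_add_distrib]
    rw [this, hπ.2]
    have : ∑ i, d i = 0 := by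
      have : ∑ i, d i = π v * ((1:ℝ) - 1) := by
        rw [Finset.sum_congr rfl (fun i _ => hdapp i), ← Finset.mul_sum]
        congr 1
        rw [Finset.sum_sub_distrib]
        simp [Finset.sum_ite_eq', hne]
      simpa using this
    rw [this, add_zero]
  · rw [expand, hdMd, hd1, add_zero]
    nlinarith [hπ.1 v, sub_nonpos.mpr hc]
  · rw [Pi.add_apply, hdapp v]
    simp [hne.symm]
  · intro i hiu hiv
    rw [Pi.add_apply, hdapp i]
    simp [hiu, hiv]


variable {n : ℕ}

lemma key (G : SimpleGraph (Fin n)) [DecidableRel G.Adj] (j : ℕ) (hj : 0 < j) :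
    ∀ N : ℕ, ∀ π : Fin n → ℝ, (Finset.univ.filter (fun i => π i ≠ 0)).card ≤ N →
    π ∈ stdSimplex ℝ (Fin n) →
    π ⬝ᵥ ((1 + G.adjMatrix ℝ) *ᵥ π) < 1 / (j : ℝ) →
    ∃ s : Finset (Fin n), IsIndepSet G s ∧ j + 1 ≤ s.card := by
  intro N
  induction N with
  | zero =>
    intro π hcard hπ _
    exfalso
    have hS : (Finset.univ.filter (fun i => π i ≠ 0)) = ∅ :=
      Finset.card_eq_zero.mp (Nat.le_zero.mp hcard)
    have hall : ∀ i, π i = 0 := by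
      intro i
      by_contra h
      have : i ∈ Finset.univ.filter (fun i => π i ≠ 0) := by simp [h]
      simp [hS] at this
    have h2 := hπ.2
    simp [hall] at h2
  | succ N ih =>
    intro π hcard hπ hlt
    set M := 1 + G.adjMatrix ℝ with hM
    set S := Finset.univ.filter (fun i => π i ≠ 0) with hS
    by_cases hind : ∀ u ∈ S, ∀ v ∈ S, ¬ G.Adj u v
    · -- support is independent
      refine ⟨S, hind, ?_⟩
      have hsum : ∑ i ∈ S, π i = 1 := by
        rw [hS, Finset.sum_filter_ne_zero, hπ.2]
      have hq : π ⬝ᵥ (M *ᵥ π) = ∑ i, (π i)^2 := by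
        apply Finset.sum_congr rfl
        intro i _
        show π i * (M *ᵥ π) i = (π i)^2
        by_cases hi : π i = 0
        · simp [hi]
        · have hiS : i ∈ S := by simp [hS, hi]
          have : (M *ᵥ π) i = π i := by
            show ∑ k, M i k * π k = π i
            rw [Finset.sum_congr rfl (g := fun k => if k = i then π i else 0)
              (fun k _ => ?_), Finset.sum_ite_eq' Finset.univ i (fun _ => π i)]
            · simp
            · by_cases hk : k = i
              · subst hk; simp [hM, Matrix.one_apply]
              · simp only [hk, if_neg, if_false]
                by_cases hk0 : π k = 0
                · simp [hk0]
                · have hkS : k ∈ S := by simp [hS, hk0]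
                  have : ¬ G.Adj i k := hind i hiS k hkS
                  simp [hM, Matrix.one_apply_ne (Ne.symm hk), this]
          rw [this]; ring
      have cauchy : (1:ℝ) ≤ S.card * (π ⬝ᵥ (M *ᵥ π)) := by
        have h1 : (∑ i ∈ S, π i)^2 ≤ S.card * ∑ i ∈ S, (π i)^2 :=
          sq_sum_le_card_mul_sum_sq
        have h2 : ∑ i ∈ S, (π i)^2 ≤ ∑ i, (π i)^2 :=
          Finset.sum_le_sum_of_subset_of_nonneg (Finset.subset_univ S)
            (fun i _ _ => sq_nonneg _)
        rw [hsum] at h1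
        rw [hq]
        calc (1:ℝ) = 1^2 := by ring
        _ ≤ S.card * ∑ i ∈ S, (π i)^2 := h1
        _ ≤ S.card * ∑ i, (π i)^2 := by
            apply mul_le_mul_of_nonneg_left h2 (by positivity)
      have hSpos : 0 < S.card := by
        by_contra h
        push_neg at h
        interval_cases h' : S.card <;> simp_all
      have : (j:ℝ) < S.card := by
        have h3 : (1:ℝ) < S.card * (1 / j) :=
          lt_of_le_of_lt cauchy (by
            apply mul_lt_mul_of_pos_left hlt
            exact_mod_cast hSpos)
        rw [mul_one_div, lt_div_iff₀ (by exact_mod_cast hj), one_mul] at h3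
        exact h3
      have : j < S.card := by exact_mod_cast this
      omega
    · push_neg at hind
      obtain ⟨u, hu, v, hv, hadj⟩ := hind
      have hne : u ≠ v := G.ne_of_adj hadj
      have huS : π u ≠ 0 := by simpa [hS] using hu
      have hvS : π v ≠ 0 := by simpa [hS] using hv
      -- choose direction of shift
      rcases le_total ((M *ᵥ π) u) ((M *ᵥ π) v) with hc | hc
      · obtain ⟨π', hπ', hle, hzero, hrest⟩ := shift_le G hadj hπ hc
        refine ih π' ?_ hπ' (lt_of_le_of_lt hle hlt)
        have hsub : (Finset.univ.filter (fun i => π' i ≠ 0)) ⊆ S.erase v := by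
          intro i hi
          simp only [Finset.mem_filter, Finset.mem_univ, true_and] at hi
          rw [Finset.mem_erase]
          constructor
          · rintro rfl; exact hi hzero
          · by_cases hiu : i = u
            · subst hiu; simpa [hS] using huS
            · have hiv : i ≠ v := by rintro rfl; exact hi hzero
              rw [hrest i hiu hiv] at hi
              simp [hS, hi]
        calc (Finset.univ.filter (fun i => π' i ≠ 0)).card ≤ (S.erase v).card :=
              Finset.card_le_card hsub
          _ = S.card - 1 := Finset.card_erase_of_mem hv
          _ ≤ N := by omega
      · obtain ⟨π', hπ', hle, hzero, hrest⟩ := shift_le G hadj.symm hπ hc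
        refine ih π' ?_ hπ' (lt_of_le_of_lt hle hlt)
        have hsub : (Finset.univ.filter (fun i => π' i ≠ 0)) ⊆ S.erase u := by
          intro i hi
          simp only [Finset.mem_filter, Finset.mem_univ, true_and] at hi
          rw [Finset.mem_erase]
          constructor
          · rintro rfl; exact hi hzero
          · by_cases hiv : i = v
            · subst hiv; simpa [hS] using hvS
            · have hiu : i ≠ u := by rintro rfl; exact hi hzero
              rw [hrest i hiv hiu] at hi
              simp [hS, hi]
        calc (Finset.univ.filter (fun i => π' i ≠ 0)).card ≤ (S.erase u).card :=
              Finset.card_le_card hsub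
          _ = S.card - 1 := Finset.card_erase_of_mem hu
          _ ≤ N := by omega


end Aux

/-- For a graph `G` on `n` vertices with adjacency matrix `C` and a
positive integer `j ≤ n`: there exists `π` in the probability simplex with
`πᵀ(I+C)π < 1/j` if and only if `G` has an independent set of size at least `j + 1`. -/
theorem quad_lt_iff_indep (n : ℕ) (G : SimpleGraph (Fin n)) [DecidableRel G.Adj]
    (j : ℕ) (hj : 0 < j) (hjn : j ≤ n) :
    (∃ π ∈ stdSimplex ℝ (Fin n), π ⬝ᵥ ((1 + G.adjMatrix ℝ) *ᵥ π) < 1 / (j : ℝ)) ↔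
    (∃ s : Finset (Fin n), IsIndepSet G s ∧ j + 1 ≤ s.card) := by
  constructor
  · rintro ⟨π, hπ, hlt⟩
    exact key G j hj ((Finset.univ.filter (fun i => π i ≠ 0)).card) π le_rfl hπ hlt
  · rintro ⟨s, hs, hcard⟩
    have hspos : 0 < s.card := by omega
    have hscardR : (0:ℝ) < (s.card : ℝ) := by exact_mod_cast hspos
    set c : ℝ := (s.card : ℝ)⁻¹ with hc
    have hc0 : (0:ℝ) < c := by positivity
    set π : Fin n → ℝ := fun i => if i ∈ s then c else 0 with hπdef
    have hπsum : ∑ i, π i = 1 := by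
      rw [hπdef]
      rw [Finset.sum_ite_mem, Finset.univ_inter, Finset.sum_const, nsmul_eq_mul]
      exact mul_inv_cancel₀ (ne_of_gt hscardR)
    have hMv : ∀ i ∈ s, ((1 + G.adjMatrix ℝ) *ᵥ π) i = c := by
      intro i hi
      show ∑ k, (1 + G.adjMatrix ℝ) i k * π k = c
      rw [Finset.sum_congr rfl (g := fun k => if k = i then c else 0) (fun k _ => ?_),
        Finset.sum_ite_eq' Finset.univ i (fun _ => c)]
      · simp
      · by_cases hk : k = i
        · subst hk; simp [hπdef, hi, Matrix.one_apply]
        · simp only [hk, if_false]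
          by_cases hks : k ∈ s
          · have : ¬ G.Adj i k := hs i hi k hks
            simp [Matrix.one_apply_ne (Ne.symm hk), this]
          · simp [hπdef, hks]
    refine ⟨π, ⟨fun i => by rw [hπdef]; dsimp only; split <;> positivity, hπsum⟩, ?_⟩
    have hQ : π ⬝ᵥ ((1 + G.adjMatrix ℝ) *ᵥ π) = c := by
      show ∑ i, π i * ((1 + G.adjMatrix ℝ) *ᵥ π) i = c
      rw [Finset.sum_congr rfl (g := fun i => if i ∈ s then c * c else 0) (fun i _ => ?_)]
      · rw [Finset.sum_ite_mem, Finset.univ_inter, Finset.sum_const, nsmul_eq_mul, hc]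
        field_simp
      · by_cases hi : i ∈ s
        · rw [hMv i hi]; simp [hπdef, hi]
        · simp [hπdef, hi]
    rw [hQ, hc, ← one_div]
    apply one_div_lt_one_div_of_lt
    · exact_mod_cast hj
    · exact_mod_cast Nat.lt_of_lt_of_le (Nat.lt_succ_self j) hcard
end
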